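/- Let G ⊂ ℝ² be a compact set with f(G) ⊆ G, where f is the Lozi map with parameters satisfying √2 < a < 2 and max{(3a²-8a+√(9a⁴-16a³))/8, 2-√2·a} < b < 0 (condition C6). Let I ⊆ G be a segment contained in an unstable manifold (so the length of fⁿ(I) is at least βⁿ·length(I) with β = (a+√(a²+4b))/2 > √2). Then there exist n ≥ 0 and a segment I₁ ⊆ fⁿ(I) such that I₁ intersects both coordinate axes. -/

import Mathlib

open MeasureTheory
open scoped ENNReal

/-- The Lozi map. -/
noncomputable def lozi (a b : ℝ) : ℝ × ℝ → ℝ × ℝ :=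
  fun p => (1 + p.2 - a * |p.1|, b * p.1)

/-- Affine branch of the Lozi map. -/
noncomputable def lozAff (s b : ℝ) : (ℝ × ℝ) →ᵃ[ℝ] (ℝ × ℝ) where
  toFun z := (1 + z.2 - s * z.1, b * z.1)
  linear :=
    { toFun := fun z => (z.2 - s * z.1, b * z.1)
      map_add' := fun x y => by
        ext <;> simp <;> ring
      map_smul' := fun c x => by
        ext <;> simp <;> ring }
  map_vadd' := fun x y => by
    ext <;> simp <;> ring

@[simp] lemma lozAff_apply (s b : ℝ) (z : ℝ × ℝ) :
    lozAff s b z = (1 + z.2 - s * z.1, b * z.1) := rfl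

lemma lozi_eq_pos {a b : ℝ} {z : ℝ × ℝ} (h : 0 ≤ z.1) :
    lozi a b z = lozAff a b z := by
  simp [lozi, abs_of_nonneg h]

lemma lozi_eq_neg {a b : ℝ} {z : ℝ × ℝ} (h : z.1 ≤ 0) :
    lozi a b z = lozAff (-a) b z := by
  apply Prod.ext <;> simp [lozi, abs_of_nonpos h] <;> ring

lemma lozi_image_pos (a b : ℝ) (u v : ℝ × ℝ) (h : ∀ z ∈ segment ℝ u v, 0 ≤ z.1) :
    lozi a b '' segment ℝ u v = segment ℝ (lozi a b u) (lozi a b v) := by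
  rw [Set.image_congr (fun z hz => lozi_eq_pos (h z hz)), image_segment,
    ← lozi_eq_pos (h u (left_mem_segment ℝ u v)),
    ← lozi_eq_pos (h v (right_mem_segment ℝ u v))]

lemma lozi_image_neg (a b : ℝ) (u v : ℝ × ℝ) (h : ∀ z ∈ segment ℝ u v, z.1 ≤ 0) :
    lozi a b '' segment ℝ u v = segment ℝ (lozi a b u) (lozi a b v) := by
  rw [Set.image_congr (fun z hz => lozi_eq_neg (h z hz)), image_segment,
    ← lozi_eq_neg (h u (left_mem_segment ℝ u v)),
    ← lozi_eq_neg (h v (right_mem_segment ℝ u v))]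

lemma seg_fst {u v z : ℝ × ℝ} (hz : z ∈ segment ℝ u v) : z.1 ∈ segment ℝ u.1 v.1 := by
  obtain ⟨α, β, hα, hβ, hαβ, rfl⟩ := hz
  exact ⟨α, β, hα, hβ, hαβ, rfl⟩

/-- Either a planar segment meets the vertical axis, or its x-coordinates have constant sign. -/
lemma seg_trichot (u v : ℝ × ℝ) :
    (∃ c ∈ segment ℝ u v, c.1 = 0) ∨ (∀ z ∈ segment ℝ u v, 0 ≤ z.1) ∨
      (∀ z ∈ segment ℝ u v, z.1 ≤ 0) := by
  by_cases h0 : (0 : ℝ) ∈ segment ℝ u.1 v.1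
  · obtain ⟨α, β, hα, hβ, hαβ, h⟩ := h0
    exact Or.inl ⟨α • u + β • v, ⟨α, β, hα, hβ, hαβ, rfl⟩, h⟩
  · rw [segment_eq_uIcc, Set.mem_uIcc] at h0
    push_neg at h0
    rcases le_total u.1 0 with h1 | h1
    · refine Or.inr (Or.inr fun z hz => ?_)
      have h2 := seg_fst hz
      rw [segment_eq_uIcc, Set.mem_uIcc] at h2
      have hv : v.1 ≤ 0 := by
        rcases le_total v.1 0 with h | h
        · exact h
        · linarith [h0.1 h1]
      rcases h2 with ⟨h3, h4⟩ | ⟨h3, h4⟩ <;> linarith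
    · refine Or.inr (Or.inl fun z hz => ?_)
      have h2 := seg_fst hz
      rw [segment_eq_uIcc, Set.mem_uIcc] at h2
      have hv : 0 ≤ v.1 := by
        rcases le_total 0 v.1 with h | h
        · exact h
        · linarith [h0.2 h]
      rcases h2 with ⟨h3, h4⟩ | ⟨h3, h4⟩ <;> linarith

/-- A segment splits at any of its points into the union of two subsegments. -/
lemma segment_split {u v c : ℝ × ℝ} (hc : c ∈ segment ℝ u v) :
    segment ℝ u v = segment ℝ u c ∪ segment ℝ c v := by
  apply Set.Subset.antisymm
  · obtain ⟨α, β, hα, hβ, hαβ, hcc⟩ := hc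
    rintro z ⟨γ, δ, hγ, hδ, hγδ, rfl⟩
    have hαe : α = 1 - β := by linarith
    have hγe : γ = 1 - δ := by linarith
    subst hαe hγe
    rcases le_total δ β with hle | hle
    · left
      rcases eq_or_lt_of_le hβ with hβ0 | hβ0
      · have hδ0 : δ = 0 := le_antisymm (hβ0 ▸ hle) hδ
        have : (1 - δ) • u + δ • v = u := by rw [hδ0]; simp
        rw [this]; exact left_mem_segment ℝ u c
      · refine ⟨1 - δ / β, δ / β, ?_, by positivity, by ring, ?_⟩
        · have : δ / β ≤ 1 := (div_le_one hβ0).2 hle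
          linarith
        · rw [← hcc]
          match_scalars <;> field_simp <;> ring
    · right
      have hβ1 : β ≤ 1 := by linarith
      rcases eq_or_lt_of_le (show (0:ℝ) ≤ 1 - β by linarith) with hα0 | hα0
      · have hδ1 : δ = 1 := by linarith
        have : (1 - δ) • u + δ • v = v := by rw [hδ1]; simp
        rw [this]; exact right_mem_segment ℝ c v
      · have hγα : 1 - δ ≤ 1 - β := by linarith
        refine ⟨(1 - δ) / (1 - β), 1 - (1 - δ) / (1 - β), by positivity, ?_, by ring, ?_⟩
        · have : (1 - δ) / (1 - β) ≤ 1 := (div_le_one hα0).2 hγα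
          linarith
        · rw [← hcc]
          match_scalars <;> field_simp <;> ring
  · apply Set.union_subset
    · exact (convex_segment u v).segment_subset (left_mem_segment ℝ u v) hc
    · exact (convex_segment u v).segment_subset hc (right_mem_segment ℝ u v)

/-- Union of a list of segments. -/
def sU : List ((ℝ × ℝ) × (ℝ × ℝ)) → Set (ℝ × ℝ)
  | [] => ∅
  | pq :: L => segment ℝ pq.1 pq.2 ∪ sU L

lemma sU_append (L M : List ((ℝ × ℝ) × (ℝ × ℝ))) : sU (L ++ M) = sU L ∪ sU M := by
  induction L with
  | nil => simp [sU]
  | cons pq L ih => simp [sU, ih, Set.union_assoc]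

open scoped Classical in
/-- Weight of a segment: 2 if it meets the vertical axis, else 1. -/
noncomputable def segW (pq : (ℝ × ℝ) × (ℝ × ℝ)) : ℕ :=
  if ∃ z ∈ segment ℝ pq.1 pq.2, z.1 = 0 then 2 else 1

noncomputable def listW (L : List ((ℝ × ℝ) × (ℝ × ℝ))) : ℕ := (L.map segW).sum

lemma one_le_segW (pq : (ℝ × ℝ) × (ℝ × ℝ)) : 1 ≤ segW pq := by
  unfold segW; split <;> norm_num

lemma segW_le_two (pq : (ℝ × ℝ) × (ℝ × ℝ)) : segW pq ≤ 2 := by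
  unfold segW; split <;> norm_num

lemma segW_eq_two {pq : (ℝ × ℝ) × (ℝ × ℝ)} (h : ∃ z ∈ segment ℝ pq.1 pq.2, z.1 = 0) :
    segW pq = 2 := by
  classical
  unfold segW
  rw [if_pos h]

lemma segW_eq_one {pq : (ℝ × ℝ) × (ℝ × ℝ)} (h : ¬∃ z ∈ segment ℝ pq.1 pq.2, z.1 = 0) :
    segW pq = 1 := by
  classical
  unfold segW
  rw [if_neg h]

lemma listW_cons (pq : (ℝ × ℝ) × (ℝ × ℝ)) (L : List ((ℝ × ℝ) × (ℝ × ℝ))) :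
    listW (pq :: L) = segW pq + listW L := by
  simp [listW]

lemma listW_append (L M : List ((ℝ × ℝ) × (ℝ × ℝ))) :
    listW (L ++ M) = listW L + listW M := by
  simp [listW]

lemma listW_le (L : List ((ℝ × ℝ) × (ℝ × ℝ))) : listW L ≤ 2 * L.length := by
  induction L with
  | nil => simp [listW]
  | cons pq L ih =>
    rw [listW_cons, List.length_cons]
    have := segW_le_two pq
    omega

lemma meas_sU (G : Set (ℝ × ℝ)) (L : List ((ℝ × ℝ) × (ℝ × ℝ))) (h : sU L ⊆ G) :
    μH[1] (sU L) ≤ (L.length : ℝ≥0∞) * EMetric.diam G := by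
  induction L with
  | nil => simp [sU]
  | cons pq L ih =>
    have h1 : segment ℝ pq.1 pq.2 ⊆ G := (Set.union_subset_iff.1 h).1
    have h2 := ih (Set.union_subset_iff.1 h).2
    have hseg : μH[1] (segment ℝ pq.1 pq.2) ≤ EMetric.diam G := by
      rw [hausdorffMeasure_segment]
      exact EMetric.edist_le_diam_of_mem (h1 (left_mem_segment ℝ _ _))
        (h1 (right_mem_segment ℝ _ _))
    calc μH[1] (sU (pq :: L)) ≤ μH[1] (segment ℝ pq.1 pq.2) + μH[1] (sU L) :=
          measure_union_le _ _
      _ ≤ EMetric.diam G + (L.length : ℝ≥0∞) * EMetric.diam G := add_le_add hseg h2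
      _ = ((pq :: L).length : ℝ≥0∞) * EMetric.diam G := by
          rw [List.length_cons]
          push_cast
          ring

/-- Under condition (C6), any nondegenerate unstable segment I in a compact
forward-invariant set G has an iterate fⁿ(I) containing a segment meeting
both coordinate axes. The unstable-manifold property of I is expressed by
the growth of the 1-dimensional Hausdorff measure (length): the length of
fⁿ(I) is at least βⁿ times the length of I. -/
theorem unstable_segment_crosses_axes (a b : ℝ)
    (ha1 : Real.sqrt 2 < a) (ha2 : a < 2)
    (hb : max ((3 * a ^ 2 - 8 * a + Real.sqrt (9 * a ^ 4 - 16 * a ^ 3)) / 8)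
      (2 - Real.sqrt 2 * a) < b)
    (hb0 : b < 0)
    (G : Set (ℝ × ℝ)) (hG : IsCompact G) (hfG : lozi a b '' G ⊆ G)
    (p q : ℝ × ℝ) (hpq : p ≠ q) (hIG : segment ℝ p q ⊆ G)
    (hgrow : ∀ n : ℕ,
      ENNReal.ofReal (((a + Real.sqrt (a ^ 2 + 4 * b)) / 2) ^ n) *
          μH[1] (segment ℝ p q) ≤
        μH[1] ((lozi a b)^[n] '' segment ℝ p q)) :
    ∃ (n : ℕ) (u v : ℝ × ℝ),
      segment ℝ u v ⊆ (lozi a b)^[n] '' segment ℝ p q ∧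
      (∃ z ∈ segment ℝ u v, z.1 = 0) ∧
      (∃ w ∈ segment ℝ u v, w.2 = 0) := by
  by_contra Hc
  push_neg at Hc
  set f := lozi a b with hfdef
  set I := segment ℝ p q with hIdef
  have hiter : ∀ n, f^[n + 1] '' I = f '' (f^[n] '' I) := fun n => by
    rw [Function.iterate_succ', Set.image_comp]
  have hsubG : ∀ n, f^[n] '' I ⊆ G := by
    intro n
    induction n with
    | zero => simpa using hIG
    | succ n ih =>
      rw [hiter]
      exact (Set.image_mono ih).trans hfG
  -- one-step refinement of a single segment
  have child : ∀ (n : ℕ) (u v : ℝ × ℝ), segment ℝ u v ⊆ f^[n] '' I →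
      ∃ C : List ((ℝ × ℝ) × (ℝ × ℝ)), sU C = f '' segment ℝ u v ∧
        C.length ≤ segW (u, v) ∧ listW C ≤ 2 := by
    intro n u v hsub
    rcases seg_trichot u v with ⟨c, hc, hc1⟩ | h | h
    · -- crossing case: split at c
      have hsplit := segment_split hc
      have hsub1 : segment ℝ u c ⊆ segment ℝ u v :=
        (convex_segment u v).segment_subset (left_mem_segment ℝ u v) hc
      have hsub2 : segment ℝ c v ⊆ segment ℝ u v :=
        (convex_segment u v).segment_subset hc (right_mem_segment ℝ u v)
      have himg : ∀ x y : ℝ × ℝ, y.1 = 0 → segment ℝ x y ⊆ segment ℝ u v →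
          f '' segment ℝ x y = segment ℝ (f x) (f y) := by
        intro x y hy1 _
        rcases le_total x.1 0 with hx | hx
        · apply lozi_image_neg
          intro z hz
          have h2 := seg_fst hz
          rw [segment_eq_uIcc, Set.mem_uIcc] at h2
          rcases h2 with ⟨h3, h4⟩ | ⟨h3, h4⟩ <;> linarith [hy1.le, hy1.ge]
        · apply lozi_image_pos
          intro z hz
          have h2 := seg_fst hz
          rw [segment_eq_uIcc, Set.mem_uIcc] at h2
          rcases h2 with ⟨h3, h4⟩ | ⟨h3, h4⟩ <;> linarith [hy1.le, hy1.ge]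
      have himg2 : ∀ x y : ℝ × ℝ, x.1 = 0 → segment ℝ x y ⊆ segment ℝ u v →
          f '' segment ℝ x y = segment ℝ (f x) (f y) := by
        intro x y hx1 hxy
        rw [segment_symm, himg y x hx1 (segment_symm ℝ x y ▸ hxy), segment_symm]
      have him1 : f '' segment ℝ u c = segment ℝ (f u) (f c) := himg u c hc1 hsub1
      have him2 : f '' segment ℝ c v = segment ℝ (f c) (f v) := himg2 c v hc1 hsub2
      have hfc2 : (f c).2 = 0 := by
        simp [hfdef, lozi, hc1]
      -- children are vertical-axis free, else conclusion would hold at time n+1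
      have hvfree : ∀ x y : ℝ × ℝ, f '' segment ℝ x y = segment ℝ (f x) (f y) →
          segment ℝ x y ⊆ segment ℝ u v → (f c ∈ segment ℝ (f x) (f y)) →
          ¬∃ z ∈ segment ℝ (f x) (f y), z.1 = 0 := by
        rintro x y him hxy hmem ⟨z, hz, hz1⟩
        have hsub' : segment ℝ (f x) (f y) ⊆ f^[n + 1] '' I := by
          rw [hiter, ← him]
          exact Set.image_mono (hxy.trans hsub)
        exact Hc (n + 1) (f x) (f y) hsub' ⟨z, hz, hz1⟩ (f c) hmem hfc2
      refine ⟨[(f u, f c), (f c, f v)], ?_, ?_, ?_⟩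
      · show segment ℝ (f u) (f c) ∪ (segment ℝ (f c) (f v) ∪ ∅) = f '' segment ℝ u v
        rw [Set.union_empty, hsplit, Set.image_union, him1, him2]
      · rw [segW_eq_two ⟨c, hc, hc1⟩]
        simp
      · have h1 := @segW_eq_one (f u, f c) (hvfree u c him1 hsub1 (right_mem_segment ℝ _ _))
        have h2 := @segW_eq_one (f c, f v) (hvfree c v him2 hsub2 (left_mem_segment ℝ _ _))
        simp only [listW, List.map, List.sum_cons, List.sum_nil]
        omega
    · refine ⟨[(f u, f v)], ?_, ?_, ?_⟩
      · show segment ℝ (f u) (f v) ∪ ∅ = f '' segment ℝ u v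
        rw [Set.union_empty, lozi_image_pos a b u v h]
      · simpa using one_le_segW (u, v)
      · have := segW_le_two (f u, f v)
        simp only [listW, List.map, List.sum_cons, List.sum_nil]
        omega
    · refine ⟨[(f u, f v)], ?_, ?_, ?_⟩
      · show segment ℝ (f u) (f v) ∪ ∅ = f '' segment ℝ u v
        rw [Set.union_empty, lozi_image_neg a b u v h]
      · simpa using one_le_segW (u, v)
      · have := segW_le_two (f u, f v)
        simp only [listW, List.map, List.sum_cons, List.sum_nil]
        omega
  -- one-step refinement of a list of segments
  have step : ∀ (n : ℕ) (L : List ((ℝ × ℝ) × (ℝ × ℝ))), sU L ⊆ f^[n] '' I →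
      ∃ L', sU L' = f '' sU L ∧ L'.length ≤ listW L ∧ listW L' ≤ 2 * L.length := by
    intro n L
    induction L with
    | nil => exact fun _ => ⟨[], by simp [sU], by simp [listW], by simp [listW]⟩
    | cons pq L ih =>
      intro h
      obtain ⟨x, y⟩ := pq
      obtain ⟨hseg, hrest⟩ := Set.union_subset_iff.1 h
      obtain ⟨L₁, hL₁, hlen₁, hw₁⟩ := ih hrest
      obtain ⟨C, hC, hlenC, hwC⟩ := child n x y hseg
      refine ⟨C ++ L₁, ?_, ?_, ?_⟩
      · rw [sU_append, hC, hL₁, show sU ((x, y) :: L) = segment ℝ x y ∪ sU L from rfl,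
          Set.image_union]
      · rw [List.length_append, listW_cons]
        omega
      · rw [listW_append, List.length_cons]
        omega
  -- main invariant: at time 2k, the image is a union of at most 2^k segments
  have main : ∀ k : ℕ, ∃ L : List ((ℝ × ℝ) × (ℝ × ℝ)),
      sU L = f^[2 * k] '' I ∧ L.length ≤ 2 ^ k := by
    intro k
    induction k with
    | zero =>
      refine ⟨[(p, q)], ?_, by norm_num⟩
      show segment ℝ p q ∪ ∅ = f^[0] '' I
      simp [hIdef]
    | succ k ih =>
      obtain ⟨L, hL, hlen⟩ := ih
      obtain ⟨L₁, hL₁, hlen₁, hw₁⟩ := step (2 * k) L (hL ▸ subset_rfl)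
      have hL₁' : sU L₁ = f^[2 * k + 1] '' I := by rw [hL₁, hL, ← hiter]
      obtain ⟨L₂, hL₂, hlen₂, _⟩ := step (2 * k + 1) L₁ (hL₁' ▸ subset_rfl)
      refine ⟨L₂, ?_, ?_⟩
      · have he : 2 * (k + 1) = 2 * k + 1 + 1 := by ring
        rw [hL₂, hL₁', ← hiter, he]
      · have h2 : (2 : ℕ) ^ (k + 1) = 2 * 2 ^ k := by ring
        have := listW_le L
        omega
  -- measure bound
  have hDne : EMetric.diam G ≠ ⊤ := hG.isBounded.ediam_ne_top
  have hbound : ∀ k : ℕ, μH[1] (f^[2 * k] '' I) ≤ (2 : ℝ≥0∞) ^ k * EMetric.diam G := by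
    intro k
    obtain ⟨L, hL, hlen⟩ := main k
    calc μH[1] (f^[2 * k] '' I) = μH[1] (sU L) := by rw [hL]
      _ ≤ (L.length : ℝ≥0∞) * EMetric.diam G := meas_sU G L (hL ▸ hsubG (2 * k))
      _ ≤ (2 : ℝ≥0∞) ^ k * EMetric.diam G := by
          apply mul_le_mul_left
          exact_mod_cast hlen
  -- β > √2
  set s := Real.sqrt (a ^ 2 + 4 * b) with hsdef
  set β := (a + s) / 2 with hβdef
  have hsqrt2 : (1 : ℝ) < Real.sqrt 2 := by
    have h2 : Real.sqrt 1 < Real.sqrt 2 := Real.sqrt_lt_sqrt (by norm_num) (by norm_num)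
    simpa using h2
  have ha0 : 0 < a := lt_trans (by linarith) ha1
  have hb2 : 2 - Real.sqrt 2 * a < b := lt_of_le_of_lt (le_max_right _ _) hb
  have hnn : (0 : ℝ) ≤ 2 * Real.sqrt 2 - a := by linarith
  have hsq : (2 * Real.sqrt 2 - a) ^ 2 < a ^ 2 + 4 * b := by
    have h2 : Real.sqrt 2 ^ 2 = 2 := Real.sq_sqrt (by norm_num)
    nlinarith
  have hslow : 2 * Real.sqrt 2 - a < s := (Real.lt_sqrt hnn).2 hsq
  have hβlow : Real.sqrt 2 < β := by
    rw [hβdef]; linarith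
  have hβ0 : 0 < β := lt_trans (by linarith) hβlow
  have hβ2 : 2 < β ^ 2 := by
    have h2 : Real.sqrt 2 ^ 2 = 2 := Real.sq_sqrt (by norm_num)
    nlinarith [Real.sqrt_nonneg 2]
  -- length of I
  have hI : μH[1] I = ENNReal.ofReal (dist p q) := by
    rw [hIdef, hausdorffMeasure_segment, edist_dist]
  have hc0 : 0 < dist p q := dist_pos.2 hpq
  set D := (EMetric.diam G).toReal with hDdef
  have hD0 : 0 ≤ D := ENNReal.toReal_nonneg
  have hDeq : EMetric.diam G = ENNReal.ofReal D := (ENNReal.ofReal_toReal hDne).symm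
  set c := dist p q with hcdef
  -- real inequality for every k
  have hreal : ∀ k : ℕ, β ^ (2 * k) * c ≤ 2 ^ k * D := by
    intro k
    have h1 := (hgrow (2 * k)).trans (hbound k)
    rw [hI, hDeq] at h1
    have h2 : ENNReal.ofReal (β ^ (2 * k) * c) ≤ ENNReal.ofReal (2 ^ k * D) := by
      rw [ENNReal.ofReal_mul (by positivity), ENNReal.ofReal_mul (by positivity),
        ENNReal.ofReal_pow (by norm_num : (0:ℝ) ≤ 2)]
      simpa using h1
    exact (ENNReal.ofReal_le_ofReal_iff (by positivity)).1 h2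
  -- contradiction
  set r := β ^ 2 / 2 with hrdef
  have hr1 : 1 < r := by rw [hrdef]; linarith
  obtain ⟨k, hk⟩ := pow_unbounded_of_one_lt (D / c) hr1
  have h1 := hreal k
  have hβ2r : β ^ 2 = 2 * r := by rw [hrdef]; ring
  have h2 : β ^ (2 * k) = 2 ^ k * r ^ k := by
    rw [pow_mul, hβ2r, mul_pow]
  rw [h2] at h1
  have h3 : D / c < r ^ k := hk
  have h4 : D < r ^ k * c := (div_lt_iff₀ hc0).1 h3
  have h5 : (0 : ℝ) < 2 ^ k := by positivity
  nlinarith
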